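/- If the initial conditions satisfy x_1 ≥ x_2 ≥ x_3 ≥ x_4 (monotone initial conditions) for the equation x_{n+4} = max{x_{n+3}, x_{n+2}, x_{n+1}, 0} - x_n, then the resulting solution is periodic with period 11. -/
import Mathlib


set_option maxHeartbeats 2000000 in
theorem stmt_2 (x : ℕ → ℝ)
    (hrec : ∀ n ≥ 1, x (n + 4) = max (max (max (x (n + 3)) (x (n + 2))) (x (n + 1))) 0 - x n)
    (hmono : x 1 ≥ x 2 ∧ x 2 ≥ x 3 ∧ x 3 ≥ x 4) :
    ∀ n ≥ 1, x (n + 11) = x n := by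
  obtain ⟨h12, h23, h34⟩ := hmono
  have key : x 12 = x 1 ∧ x 13 = x 2 ∧ x 14 = x 3 ∧ x 15 = x 4 := by
    have h1 := hrec 1 (by norm_num)
    have h2 := hrec 2 (by norm_num)
    have h3 := hrec 3 (by norm_num)
    have h4 := hrec 4 (by norm_num)
    have h5 := hrec 5 (by norm_num)
    have h6 := hrec 6 (by norm_num)
    have h7 := hrec 7 (by norm_num)
    have h8 := hrec 8 (by norm_num)
    have h9 := hrec 9 (by norm_num)
    have h10 := hrec 10 (by norm_num)
    have h11 := hrec 11 (by norm_num)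
    norm_num at h1 h2 h3 h4 h5 h6 h7 h8 h9 h10 h11
    rcases le_or_gt 0 (x 2) with hb | hb
    · rcases le_or_gt 0 (x 3) with hc | hc
      · rcases le_or_gt 0 (x 4) with hd | hd
        · -- all nonneg
          have e5 : x 5 = x 2 - x 1 := by rw [h1]; simp only [max_def]; split_ifs <;> linarith
          have e6 : x 6 = x 3 - x 2 := by rw [h2, e5]; simp only [max_def]; split_ifs <;> linarith
          have e7 : x 7 = x 4 - x 3 := by rw [h3, e6, e5]; simp only [max_def]; split_ifs <;> linarith
          have e8 : x 8 = -x 4 := by rw [h4, e7, e6, e5]; simp only [max_def]; split_ifs <;> linarith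
          have e9 : x 9 = x 1 - x 2 := by rw [h5, e8, e7, e6, e5]; simp only [max_def]; split_ifs <;> linarith
          have e10 : x 10 = x 1 - x 3 := by rw [h6, e9, e8, e7, e6]; simp only [max_def]; split_ifs <;> linarith
          have e11 : x 11 = x 1 - x 4 := by rw [h7, e10, e9, e8, e7]; simp only [max_def]; split_ifs <;> linarith
          have e12 : x 12 = x 1 := by rw [h8, e11, e10, e9, e8]; simp only [max_def]; split_ifs <;> linarith
          have e13 : x 13 = x 2 := by rw [h9, e12, e11, e10, e9]; simp only [max_def]; split_ifs <;> linarith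
          have e14 : x 14 = x 3 := by rw [h10, e13, e12, e11, e10]; simp only [max_def]; split_ifs <;> linarith
          have e15 : x 15 = x 4 := by rw [h11, e14, e13, e12, e11]; simp only [max_def]; split_ifs <;> linarith
          exact ⟨e12, e13, e14, e15⟩
        · -- d < 0
          have e5 : x 5 = x 2 - x 1 := by rw [h1]; simp only [max_def]; split_ifs <;> linarith
          have e6 : x 6 = x 3 - x 2 := by rw [h2, e5]; simp only [max_def]; split_ifs <;> linarith
          have e7 : x 7 = -x 3 := by rw [h3, e6, e5]; simp only [max_def]; split_ifs <;> linarith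
          have e8 : x 8 = -x 4 := by rw [h4, e7, e6, e5]; simp only [max_def]; split_ifs <;> linarith
          have e9 : x 9 = x 1 - x 2 - x 4 := by rw [h5, e8, e7, e6, e5]; simp only [max_def]; split_ifs <;> linarith
          have e10 : x 10 = x 1 - x 3 - x 4 := by rw [h6, e9, e8, e7, e6]; simp only [max_def]; split_ifs <;> linarith
          have e11 : x 11 = x 1 - x 4 := by rw [h7, e10, e9, e8, e7]; simp only [max_def]; split_ifs <;> linarith
          have e12 : x 12 = x 1 := by rw [h8, e11, e10, e9, e8]; simp only [max_def]; split_ifs <;> linarith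
          have e13 : x 13 = x 2 := by rw [h9, e12, e11, e10, e9]; simp only [max_def]; split_ifs <;> linarith
          have e14 : x 14 = x 3 := by rw [h10, e13, e12, e11, e10]; simp only [max_def]; split_ifs <;> linarith
          have e15 : x 15 = x 4 := by rw [h11, e14, e13, e12, e11]; simp only [max_def]; split_ifs <;> linarith
          exact ⟨e12, e13, e14, e15⟩
      · -- c < 0
        have e5 : x 5 = x 2 - x 1 := by rw [h1]; simp only [max_def]; split_ifs <;> linarith
        have e6 : x 6 = -x 2 := by rw [h2, e5]; simp only [max_def]; split_ifs <;> linarith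
        have e7 : x 7 = -x 3 := by rw [h3, e6, e5]; simp only [max_def]; split_ifs <;> linarith
        have e8 : x 8 = -x 3 - x 4 := by rw [h4, e7, e6, e5]; simp only [max_def]; split_ifs <;> linarith
        have e9 : x 9 = x 1 - x 2 - x 3 - x 4 := by rw [h5, e8, e7, e6, e5]; simp only [max_def]; split_ifs <;> linarith
        have e10 : x 10 = x 1 - x 3 - x 4 := by rw [h6, e9, e8, e7, e6]; simp only [max_def]; split_ifs <;> linarith
        have e11 : x 11 = x 1 - x 4 := by rw [h7, e10, e9, e8, e7]; simp only [max_def]; split_ifs <;> linarith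
        have e12 : x 12 = x 1 := by rw [h8, e11, e10, e9, e8]; simp only [max_def]; split_ifs <;> linarith
        have e13 : x 13 = x 2 := by rw [h9, e12, e11, e10, e9]; simp only [max_def]; split_ifs <;> linarith
        have e14 : x 14 = x 3 := by rw [h10, e13, e12, e11, e10]; simp only [max_def]; split_ifs <;> linarith
        have e15 : x 15 = x 4 := by rw [h11, e14, e13, e12, e11]; simp only [max_def]; split_ifs <;> linarith
        exact ⟨e12, e13, e14, e15⟩
    · rcases le_or_gt 0 (x 1) with ha | ha
      · -- a ≥ 0 > b
        have e5 : x 5 = -x 1 := by rw [h1]; simp only [max_def]; split_ifs <;> linarith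
        have e6 : x 6 = -x 2 := by rw [h2, e5]; simp only [max_def]; split_ifs <;> linarith
        have e7 : x 7 = -x 2 - x 3 := by rw [h3, e6, e5]; simp only [max_def]; split_ifs <;> linarith
        have e8 : x 8 = -x 2 - x 3 - x 4 := by rw [h4, e7, e6, e5]; simp only [max_def]; split_ifs <;> linarith
        have e9 : x 9 = x 1 - x 2 - x 3 - x 4 := by rw [h5, e8, e7, e6, e5]; simp only [max_def]; split_ifs <;> linarith
        have e10 : x 10 = x 1 - x 3 - x 4 := by rw [h6, e9, e8, e7, e6]; simp only [max_def]; split_ifs <;> linarith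
        have e11 : x 11 = x 1 - x 4 := by rw [h7, e10, e9, e8, e7]; simp only [max_def]; split_ifs <;> linarith
        have e12 : x 12 = x 1 := by rw [h8, e11, e10, e9, e8]; simp only [max_def]; split_ifs <;> linarith
        have e13 : x 13 = x 2 := by rw [h9, e12, e11, e10, e9]; simp only [max_def]; split_ifs <;> linarith
        have e14 : x 14 = x 3 := by rw [h10, e13, e12, e11, e10]; simp only [max_def]; split_ifs <;> linarith
        have e15 : x 15 = x 4 := by rw [h11, e14, e13, e12, e11]; simp only [max_def]; split_ifs <;> linarith
        exact ⟨e12, e13, e14, e15⟩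
      · -- a < 0
        have e5 : x 5 = -x 1 := by rw [h1]; simp only [max_def]; split_ifs <;> linarith
        have e6 : x 6 = -x 1 - x 2 := by rw [h2, e5]; simp only [max_def]; split_ifs <;> linarith
        have e7 : x 7 = -x 1 - x 2 - x 3 := by rw [h3, e6, e5]; simp only [max_def]; split_ifs <;> linarith
        have e8 : x 8 = -x 1 - x 2 - x 3 - x 4 := by rw [h4, e7, e6, e5]; simp only [max_def]; split_ifs <;> linarith
        have e9 : x 9 = -x 2 - x 3 - x 4 := by rw [h5, e8, e7, e6, e5]; simp only [max_def]; split_ifs <;> linarith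
        have e10 : x 10 = -x 3 - x 4 := by rw [h6, e9, e8, e7, e6]; simp only [max_def]; split_ifs <;> linarith
        have e11 : x 11 = -x 4 := by rw [h7, e10, e9, e8, e7]; simp only [max_def]; split_ifs <;> linarith
        have e12 : x 12 = x 1 := by rw [h8, e11, e10, e9, e8]; simp only [max_def]; split_ifs <;> linarith
        have e13 : x 13 = x 2 := by rw [h9, e12, e11, e10, e9]; simp only [max_def]; split_ifs <;> linarith
        have e14 : x 14 = x 3 := by rw [h10, e13, e12, e11, e10]; simp only [max_def]; split_ifs <;> linarith
        have e15 : x 15 = x 4 := by rw [h11, e14, e13, e12, e11]; simp only [max_def]; split_ifs <;> linarith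
        exact ⟨e12, e13, e14, e15⟩
  obtain ⟨k12, k13, k14, k15⟩ := key
  intro n hn
  induction n using Nat.strong_induction_on with
  | _ n ih =>
    match n, hn with
    | 1, _ => exact k12
    | 2, _ => exact k13
    | 3, _ => exact k14
    | 4, _ => exact k15
    | (m+5), _ =>
      have hm : m + 1 ≥ 1 := by omega
      have hr1 := hrec (m+1+11) (by omega)
      have hr2 := hrec (m+1) hm
      have i0 := ih (m+1) (by omega) (by omega)
      have i1 := ih (m+2) (by omega) (by omega)
      have i2 := ih (m+3) (by omega) (by omega)
      have i3 := ih (m+4) (by omega) (by omega)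
      have : m + 5 + 11 = (m+1+11) + 4 := by ring
      rw [this, hr1]
      have e1 : m + 1 + 11 + 3 = m + 4 + 11 := by ring
      have e2 : m + 1 + 11 + 2 = m + 3 + 11 := by ring
      have e3 : m + 1 + 11 + 1 = m + 2 + 11 := by ring
      rw [e1, e2, e3, i0, i1, i2, i3]
      have : m + 5 = (m+1) + 4 := by ring
      rw [this, hr2]
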